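/- Let f(z) = 1 − b E[z^Z] + (log z)·b E[Z z^Z] with Z ≥ 0 bounded, integer-valued, P(Z ≥ 1) > 0, b ≥ 2, and p₀ = P(Z = 0). Then lim_{z↓0} f(z) = 1 − b p₀ and lim_{z→∞} f(z) = ∞; consequently f has exactly one root in (0,∞) if p₀ > 1/b and exactly two roots if p₀ < 1/b. -/

import Mathlib

open MeasureTheory Filter

/-- For `f(z) = 1 − b E[z^Z] + (log z) b E[Z z^Z]`:
`lim_{z↓0} f(z) = 1 − b p₀`, `lim_{z→∞} f(z) = ∞`; `f` has exactly one positive root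
when `p₀ > 1/b` and exactly two positive roots when `p₀ < 1/b`. -/
theorem f_limits_and_roots
    {Ω : Type*} [MeasurableSpace Ω] (P : Measure Ω) [IsProbabilityMeasure P]
    (b : ℕ) (hb : 2 ≤ b) (Z : Ω → ℕ) (hZmeas : Measurable Z)
    (hZbd : ∃ M : ℕ, ∀ ω, Z ω ≤ M)
    (hZpos : 0 < P {ω | 1 ≤ Z ω})
    (p₀ : ℝ) (hp₀ : p₀ = (P {ω | Z ω = 0}).toReal)
    (f : ℝ → ℝ)
    (hf : ∀ z : ℝ, f z = 1 - (b : ℝ) * (∫ ω, z ^ Z ω ∂P)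
        + Real.log z * ((b : ℝ) * ∫ ω, (Z ω : ℝ) * z ^ Z ω ∂P)) :
    Filter.Tendsto f (nhdsWithin 0 (Set.Ioi 0)) (nhds (1 - (b : ℝ) * p₀)) ∧
    Filter.Tendsto f atTop atTop ∧
    (1 / (b : ℝ) < p₀ → ∃! z : ℝ, 0 < z ∧ f z = 0) ∧
    (p₀ < 1 / (b : ℝ) → ∃ z₀ z₁ : ℝ, 0 < z₀ ∧ z₀ < z₁ ∧
      {z : ℝ | 0 < z ∧ f z = 0} = {z₀, z₁}) := by
  obtain ⟨M, hM⟩ := hZbd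
  set S : Finset ℕ := Finset.range (M+1) with hS
  set p : ℕ → ℝ := fun l => (P {ω | Z ω = l}).toReal with hp
  have hmeas : ∀ l : ℕ, MeasurableSet {ω | Z ω = l} := fun l => hZmeas (measurableSet_singleton l)
  have h0S : (0:ℕ) ∈ S := by simp [hS]
  -- integrals as finite sums
  have int_comp : ∀ g : ℕ → ℝ, (∫ ω, g (Z ω) ∂P) = ∑ l ∈ S, g l * p l := by
    intro g
    have h1 : ∀ ω, g (Z ω) = ∑ l ∈ S, Set.indicator {ω' | Z ω' = l} (fun _ => g l) ω := by
      intro ω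
      simp only [Set.indicator_apply, Set.mem_setOf_eq]
      rw [Finset.sum_ite_eq S (Z ω) g]
      simp [hS, Nat.lt_succ_iff, hM ω]
    simp only [h1]
    rw [integral_finset_sum]
    · refine Finset.sum_congr rfl fun l _ => ?_
      rw [integral_indicator_const _ (hmeas l)]
      simp [hp, mul_comm, Measure.real]
    · intro l _
      exact (integrable_const (g l)).indicator (hmeas l)
  have hpnn : ∀ l, 0 ≤ p l := fun l => ENNReal.toReal_nonneg
  have hsum1 : ∑ l ∈ S, p l = 1 := by
    have h := int_comp (fun _ => (1:ℝ))
    simp at h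
    exact h.symm
  have hp0 : p 0 = p₀ := by rw [hp₀]
  have hb2 : (2:ℝ) ≤ (b:ℝ) := by exact_mod_cast hb
  have hbpos : (0:ℝ) < (b:ℝ) := by linarith
  -- p 0 < 1
  have hp0lt : p 0 < 1 := by
    have hcompl : {ω | Z ω = 0}ᶜ = {ω | 1 ≤ Z ω} := by
      ext ω; simp [Nat.one_le_iff_ne_zero]
    have hne : P {ω | Z ω = 0} ≠ 1 := by
      intro h
      have hc := prob_compl_eq_one_sub (μ := P) (hmeas 0)
      rw [h, hcompl] at hc
      simp at hc
      rw [hc] at hZpos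
      exact lt_irrefl _ hZpos
    have hlt : P {ω | Z ω = 0} < 1 := lt_of_le_of_ne prob_le_one hne
    have := (ENNReal.toReal_lt_toReal (measure_ne_top P _) ENNReal.one_ne_top).mpr hlt
    simpa [hp] using this
  have hql : ∑ l ∈ S.erase 0, p l = 1 - p 0 := by
    have h := Finset.add_sum_erase S p h0S
    rw [hsum1] at h
    linarith
  -- the polynomial version of f
  obtain ⟨F, hFdef⟩ : ∃ F : ℝ → ℝ, ∀ z, F z =
      1 - (b:ℝ) * ∑ l ∈ S, z ^ l * p l
        + Real.log z * ((b:ℝ) * ∑ l ∈ S, (l:ℝ) * z ^ l * p l) := ⟨_, fun z => rfl⟩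
  have hfF : f = F := by
    funext z
    rw [hf z, hFdef z, int_comp (fun n => z ^ n), int_comp (fun n => (n:ℝ) * z ^ n)]
  -- derivative
  have hderiv : ∀ z : ℝ, 0 < z →
      HasDerivAt F (Real.log z * ((b:ℝ) * ∑ l ∈ S, (l:ℝ)^2 * z^(l-1) * p l)) z := by
    intro z hz
    have hz' : z ≠ 0 := ne_of_gt hz
    have h1 : HasDerivAt (fun z : ℝ => ∑ l ∈ S, z ^ l * p l)
        (∑ l ∈ S, ((l:ℝ) * z^(l-1)) * p l) z :=
      HasDerivAt.fun_sum fun l _ => (hasDerivAt_pow l z).mul_const (p l)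
    have h2 : HasDerivAt (fun z : ℝ => ∑ l ∈ S, (l:ℝ) * z ^ l * p l)
        (∑ l ∈ S, ((l:ℝ) * ((l:ℝ) * z^(l-1))) * p l) z :=
      HasDerivAt.fun_sum fun l _ => ((hasDerivAt_pow l z).const_mul ((l:ℝ))).mul_const (p l)
    have h3 : HasDerivAt F
        (-((b:ℝ) * ∑ l ∈ S, ((l:ℝ) * z^(l-1)) * p l)
          + (z⁻¹ * ((b:ℝ) * ∑ l ∈ S, (l:ℝ) * z ^ l * p l)
            + Real.log z * ((b:ℝ) * ∑ l ∈ S, ((l:ℝ) * ((l:ℝ) * z^(l-1))) * p l))) z := by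
      have hA := (h1.const_mul ((b:ℝ))).const_sub 1
      have hB := (Real.hasDerivAt_log hz').mul (h2.const_mul ((b:ℝ)))
      have hFeq : F = fun z => 1 - (b:ℝ) * ∑ l ∈ S, z ^ l * p l
          + Real.log z * ((b:ℝ) * ∑ l ∈ S, (l:ℝ) * z ^ l * p l) := funext hFdef
      rw [hFeq]
      exact hA.add hB
    convert h3 using 1
    have key : ∀ l : ℕ, z⁻¹ * ((l:ℝ) * z^l * p l) = (l:ℝ) * z^(l-1) * p l := by
      intro l
      cases l with
      | zero => simp
      | succ n =>
        have hzp : z^(n+1) = z^n * z := pow_succ z n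
        rw [Nat.succ_sub_one, hzp]
        field_simp
    have e1 : z⁻¹ * ((b:ℝ) * ∑ l ∈ S, (l:ℝ) * z ^ l * p l)
        = (b:ℝ) * ∑ l ∈ S, ((l:ℝ) * z^(l-1)) * p l := by
      rw [mul_left_comm]
      congr 1
      rw [Finset.mul_sum]
      exact Finset.sum_congr rfl fun l _ => key l
    have e2 : ∑ l ∈ S, ((l:ℝ) * ((l:ℝ) * z^(l-1))) * p l
        = ∑ l ∈ S, (l:ℝ)^2 * z^(l-1) * p l :=
      Finset.sum_congr rfl fun l _ => by ring
    rw [e1, e2]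
    ring
  have hderivF : ∀ z : ℝ, 0 < z →
      deriv F z = Real.log z * ((b:ℝ) * ∑ l ∈ S, (l:ℝ)^2 * z^(l-1) * p l) :=
    fun z hz => (hderiv z hz).deriv
  -- positivity of the sum in the derivative
  have hex : ∃ l ∈ S.erase 0, 0 < p l := by
    by_contra h
    push_neg at h
    have : ∑ l ∈ S.erase 0, p l ≤ 0 := Finset.sum_nonpos h
    rw [hql] at this
    linarith
  obtain ⟨l₀, hl₀S, hl₀pos⟩ := hex
  have hl₀ne : l₀ ≠ 0 := (Finset.mem_erase.mp hl₀S).1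
  have hE : ∀ z : ℝ, 0 < z → 0 < ∑ l ∈ S, (l:ℝ)^2 * z^(l-1) * p l := by
    intro z hz
    have hterm : ∀ l ∈ S, 0 ≤ (l:ℝ)^2 * z^(l-1) * p l := fun l _ => by
      have := hpnn l
      positivity
    have hl₀r : (0:ℝ) < (l₀:ℝ) := by exact_mod_cast Nat.pos_of_ne_zero hl₀ne
    have h0 : 0 < (l₀:ℝ)^2 * z^(l₀-1) * p l₀ := by positivity
    exact lt_of_lt_of_le h0 (Finset.single_le_sum hterm (Finset.mem_of_mem_erase hl₀S))
  -- continuity and monotonicity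
  have hcont : ContinuousOn F (Set.Ioi 0) :=
    fun z hz => ((hderiv z hz).continuousAt).continuousWithinAt
  have hanti : StrictAntiOn F (Set.Ioc 0 1) := by
    apply strictAntiOn_of_deriv_neg (convex_Ioc 0 1)
      (hcont.mono (fun x hx => hx.1))
    intro z hz
    rw [interior_Ioc] at hz
    rw [hderivF z hz.1]
    exact mul_neg_of_neg_of_pos (Real.log_neg hz.1 hz.2) (mul_pos hbpos (hE z hz.1))
  have hmono : StrictMonoOn F (Set.Ici 1) := by
    apply strictMonoOn_of_deriv_pos (convex_Ici 1)
      (hcont.mono (fun x hx => Set.mem_Ioi.mpr (lt_of_lt_of_le zero_lt_one hx)))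
    intro z hz
    rw [interior_Ici] at hz
    rw [hderivF z (lt_trans zero_lt_one hz)]
    exact mul_pos (Real.log_pos hz) (mul_pos hbpos (hE z (lt_trans zero_lt_one hz)))
  have hF1 : F 1 = 1 - (b:ℝ) := by
    rw [hFdef 1]
    simp [hsum1]
  have hF1neg : F 1 < 0 := by rw [hF1]; linarith
  -- limit at 0+
  have hlim0 : Tendsto F (nhdsWithin 0 (Set.Ioi 0)) (nhds (1 - (b:ℝ) * p 0)) := by
    have hA : Tendsto (fun z : ℝ => ∑ l ∈ S, z^l * p l) (nhdsWithin 0 (Set.Ioi 0)) (nhds (p 0)) := by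
      have h1 : Tendsto (fun z : ℝ => ∑ l ∈ S, z^l * p l) (nhds 0)
          (nhds (∑ l ∈ S, (0:ℝ)^l * p l)) := by
        apply tendsto_finset_sum
        intro l _
        exact ((continuous_pow l).tendsto 0).mul_const _
      have hval : ∑ l ∈ S, (0:ℝ)^l * p l = p 0 := by
        rw [Finset.sum_eq_single_of_mem 0 h0S (fun l _ hne => by simp [zero_pow hne])]
        simp
      rw [hval] at h1
      exact h1.mono_left nhdsWithin_le_nhds
    have hB : Tendsto (fun z : ℝ => Real.log z * ((b:ℝ) * ∑ l ∈ S, (l:ℝ) * z^l * p l))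
        (nhdsWithin 0 (Set.Ioi 0)) (nhds 0) := by
      have he : (fun z : ℝ => Real.log z * ((b:ℝ) * ∑ l ∈ S, (l:ℝ) * z^l * p l))
          = fun z : ℝ => ∑ l ∈ S, (b:ℝ) * (l:ℝ) * p l * (z^l * Real.log z) := by
        funext z
        rw [Finset.mul_sum, Finset.mul_sum]
        exact Finset.sum_congr rfl fun l _ => by ring
      rw [he]
      have h0 : Tendsto (fun z : ℝ => ∑ l ∈ S, (b:ℝ) * (l:ℝ) * p l * (z^l * Real.log z))
          (nhdsWithin 0 (Set.Ioi 0)) (nhds (∑ l ∈ S, 0)) := by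
        apply tendsto_finset_sum
        intro l _
        rcases Nat.eq_zero_or_pos l with rfl | hl
        · simpa using (tendsto_const_nhds : Tendsto (fun _ : ℝ => (0:ℝ)) _ (nhds 0))
        · have hzl : Tendsto (fun z : ℝ => z^l * Real.log z) (nhdsWithin 0 (Set.Ioi 0)) (nhds 0) := by
            obtain ⟨n, rfl⟩ : ∃ n, l = n+1 := ⟨l-1, (Nat.succ_pred_eq_of_pos hl).symm⟩
            have h1 : Tendsto (fun z : ℝ => Real.log z * z) (nhdsWithin 0 (Set.Ioi 0)) (nhds 0) := by
              simpa [Real.rpow_one] using tendsto_log_mul_rpow_nhdsGT_zero zero_lt_one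
            have h3 := (((continuous_pow n).tendsto 0).mono_left
              (nhdsWithin_le_nhds : nhdsWithin (0:ℝ) (Set.Ioi 0) ≤ nhds 0)).mul h1
            simp only [mul_zero] at h3
            refine h3.congr fun z => ?_
            rw [pow_succ]
            ring
          simpa using hzl.const_mul ((b:ℝ) * (l:ℝ) * p l)
      simpa using h0
    have h := ((tendsto_const_nhds (x := (1:ℝ)) (f := nhdsWithin (0:ℝ) (Set.Ioi 0))).sub (hA.const_mul ((b:ℝ)))).add hB
    simp only [add_zero] at h
    refine h.congr fun z => ?_
    rw [hFdef z]
  -- rewriting F for the lower bound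
  have hrw : ∀ z : ℝ, F z = 1 + (b:ℝ) * ∑ l ∈ S, ((l:ℝ) * Real.log z - 1) * z^l * p l := by
    intro z
    have h : ∑ l ∈ S, ((l:ℝ) * Real.log z - 1) * z^l * p l
        = Real.log z * ∑ l ∈ S, (l:ℝ) * z^l * p l - ∑ l ∈ S, z^l * p l := by
      rw [Finset.mul_sum, ← Finset.sum_sub_distrib]
      exact Finset.sum_congr rfl fun l _ => by ring
    rw [hFdef z, h]
    ring
  -- eventual lower bound for atTop
  have hineq : ∀ z : ℝ, Real.exp 1 ≤ z →
      1 + (b:ℝ) * (-(p 0) + (Real.log z - 1) * z * (1 - p 0)) ≤ F z := by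
    intro z hz
    have h1e : (1:ℝ) ≤ Real.exp 1 := Real.one_le_exp (by norm_num)
    have hz1 : (1:ℝ) ≤ z := le_trans h1e hz
    have hzpos : (0:ℝ) < z := lt_of_lt_of_le zero_lt_one hz1
    have hlog1 : 1 ≤ Real.log z := by
      rw [← Real.log_exp 1]
      exact Real.log_le_log (Real.exp_pos 1) hz
    rw [hrw z]
    have hsum_ge : -(p 0) + (Real.log z - 1) * z * (1 - p 0)
        ≤ ∑ l ∈ S, ((l:ℝ) * Real.log z - 1) * z^l * p l := by
      rw [← Finset.add_sum_erase S _ h0S]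
      refine add_le_add ?_ ?_
      · simp
      · rw [← hql, Finset.mul_sum]
        apply Finset.sum_le_sum
        intro l hl
        have hl1 : 1 ≤ l := Nat.one_le_iff_ne_zero.mpr (Finset.mem_erase.mp hl).1
        have hl1' : (1:ℝ) ≤ (l:ℝ) := by exact_mod_cast hl1
        have hzpow : z ≤ z^l := by
          calc z = z^1 := (pow_one z).symm
          _ ≤ z^l := pow_le_pow_right₀ hz1 hl1
        have h2 : Real.log z - 1 ≤ (l:ℝ) * Real.log z - 1 := by nlinarith
        have h3 : (0:ℝ) ≤ Real.log z - 1 := by linarith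
        have h4 : (Real.log z - 1) * z ≤ ((l:ℝ) * Real.log z - 1) * z^l :=
          mul_le_mul h2 hzpow (le_of_lt hzpos) (by linarith)
        exact mul_le_mul_of_nonneg_right h4 (hpnn l)
    have := mul_le_mul_of_nonneg_left hsum_ge (le_of_lt hbpos)
    linarith
  -- limit atTop
  have hlimtop : Tendsto F atTop atTop := by
    apply tendsto_atTop_mono' atTop
      ((eventually_ge_atTop (Real.exp 1)).mono fun z hz => hineq z hz)
    have h1 : Tendsto (fun z : ℝ => (Real.log z - 1) * z) atTop atTop := by
      have := (tendsto_atTop_add_const_right atTop (-1 : ℝ) Real.tendsto_log_atTop).atTop_mul_atTop₀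
        (tendsto_id (α := ℝ))
      refine this.congr fun z => ?_
      simp [sub_eq_add_neg]
    have h2 : Tendsto (fun z : ℝ => (Real.log z - 1) * z * (1 - p 0)) atTop atTop :=
      Tendsto.atTop_mul_const (by linarith) h1
    have h3 : Tendsto (fun z : ℝ => -(p 0) + (Real.log z - 1) * z * (1 - p 0)) atTop atTop :=
      tendsto_atTop_add_const_left atTop _ h2
    have h4 : Tendsto (fun z : ℝ => (b:ℝ) * (-(p 0) + (Real.log z - 1) * z * (1 - p 0))) atTop atTop :=
      h3.const_mul_atTop hbpos
    exact tendsto_atTop_add_const_left atTop 1 h4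
  -- the root in (1, ∞)
  obtain ⟨z₁, hz₁gt, hz₁F, hz₁uniq⟩ :
      ∃ z₁, 1 < z₁ ∧ F z₁ = 0 ∧ ∀ w, 1 ≤ w → F w = 0 → w = z₁ := by
    obtain ⟨c, hcpos, hc1⟩ : ∃ c, 0 < F c ∧ 1 ≤ c := by
      exact ((hlimtop.eventually_gt_atTop 0).and (eventually_ge_atTop (1:ℝ))).exists
    have hsub : Set.Icc (1:ℝ) c ⊆ Set.Ioi 0 := fun x hx => lt_of_lt_of_le zero_lt_one hx.1
    have hIVT := intermediate_value_Icc hc1 (hcont.mono hsub)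
    obtain ⟨z₁, hz₁mem, hz₁⟩ := hIVT ⟨le_of_lt hF1neg, le_of_lt hcpos⟩
    have hz₁gt : 1 < z₁ := by
      rcases lt_or_eq_of_le hz₁mem.1 with h | h
      · exact h
      · exfalso; rw [← h] at hz₁; rw [hz₁] at hF1neg; exact lt_irrefl _ hF1neg
    exact ⟨z₁, hz₁gt, hz₁, fun w hw hw0 =>
      hmono.injOn (Set.mem_Ici.mpr hw) (Set.mem_Ici.mpr (le_of_lt hz₁gt)) (by rw [hw0, hz₁])⟩
  -- value bound on (0,1)
  have hFle : ∀ z : ℝ, 0 < z → z < 1 → F z ≤ 1 - (b:ℝ) * p 0 := by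
    intro z hz hz1
    apply ge_of_tendsto hlim0
    filter_upwards [Ioo_mem_nhdsGT_of_mem (Set.left_mem_Ico.mpr hz)] with w hw
    exact le_of_lt (hanti ⟨hw.1, le_of_lt (lt_trans hw.2 hz1)⟩ ⟨hz, le_of_lt hz1⟩ hw.2)
  rw [hfF, ← hp0]
  refine ⟨hlim0, hlimtop, ?_, ?_⟩
  · -- unique root when 1/b < p 0
    intro hgt
    have hL : 1 - (b:ℝ) * p 0 < 0 := by
      have h1 : 1 < p 0 * (b:ℝ) := (div_lt_iff₀ hbpos).mp hgt
      nlinarith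
    refine ⟨z₁, ⟨lt_trans zero_lt_one hz₁gt, hz₁F⟩, ?_⟩
    rintro w ⟨hwpos, hw0⟩
    rcases lt_trichotomy w 1 with hw1 | hw1 | hw1
    · exfalso
      have := hFle w hwpos hw1
      rw [hw0] at this
      linarith
    · exfalso; rw [hw1, hF1] at hw0; linarith
    · exact hz₁uniq w (le_of_lt hw1) hw0
  · -- two roots when p 0 < 1/b
    intro hlt
    have hL : 0 < 1 - (b:ℝ) * p 0 := by
      have h1 : p 0 * (b:ℝ) < 1 := (lt_div_iff₀ hbpos).mp hlt
      nlinarith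
    obtain ⟨a, hapos, ha1, haF⟩ : ∃ a : ℝ, 0 < a ∧ a < 1 ∧ 0 < F a := by
      have h1 : ∀ᶠ w in nhdsWithin (0:ℝ) (Set.Ioi 0), 0 < F w :=
        hlim0.eventually (eventually_gt_nhds hL)
      have h2 : Set.Ioo (0:ℝ) 1 ∈ nhdsWithin (0:ℝ) (Set.Ioi 0) :=
        Ioo_mem_nhdsGT_of_mem (Set.left_mem_Ico.mpr zero_lt_one)
      obtain ⟨a, ha1, ha2⟩ := (h1.and (eventually_of_mem h2 (fun x hx => hx))).exists
      exact ⟨a, ha2.1, ha2.2, ha1⟩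
    have hsub : Set.Icc a 1 ⊆ Set.Ioi 0 := fun x hx => lt_of_lt_of_le hapos hx.1
    have hIVT := intermediate_value_Icc' (le_of_lt ha1) (hcont.mono hsub)
    obtain ⟨z₀, hz₀mem, hz₀F⟩ := hIVT ⟨le_of_lt hF1neg, le_of_lt haF⟩
    have hz₀pos : 0 < z₀ := lt_of_lt_of_le hapos hz₀mem.1
    have hz₀lt1 : z₀ < 1 := by
      rcases lt_or_eq_of_le hz₀mem.2 with h | h
      · exact h
      · exfalso; rw [h] at hz₀F; rw [hz₀F] at hF1neg; exact lt_irrefl _ hF1neg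
    refine ⟨z₀, z₁, hz₀pos, lt_trans hz₀lt1 hz₁gt, ?_⟩
    ext w
    simp only [Set.mem_setOf_eq, Set.mem_insert_iff, Set.mem_singleton_iff]
    constructor
    · rintro ⟨hwpos, hw0⟩
      rcases le_or_gt w 1 with hw1 | hw1
      · left
        exact hanti.injOn ⟨hwpos, hw1⟩ ⟨hz₀pos, le_of_lt hz₀lt1⟩ (by rw [hw0, hz₀F])
      · right
        exact hz₁uniq w (le_of_lt hw1) hw0
    · rintro (rfl | rfl)
      · exact ⟨hz₀pos, hz₀F⟩
      · exact ⟨lt_trans zero_lt_one hz₁gt, hz₁F⟩
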